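/- Let P and Q be probability measures on a space Z with densities p,q such that ρ = sup_z log(p(z)/q(z)) < ∞. Then ∫ dP(z) log²(dP(z)/dQ(z)) ≤ 2(ρ+1)·KL(P‖Q). -/

import Mathlib

open MeasureTheory Real

private noncomputable def Fρ (ρ t : ℝ) : ℝ :=
  2*(ρ+1)*(t * Real.exp t - Real.exp t + 1) - Real.exp t * t^2

private lemma hasDerivFρ (ρ t : ℝ) :
    HasDerivAt (Fρ ρ) (t * Real.exp t * (2*ρ - t)) t := by
  have h1 : HasDerivAt (fun t : ℝ => t * Real.exp t) (1 * Real.exp t + t * Real.exp t) t :=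
    (hasDerivAt_id t).mul (Real.hasDerivAt_exp t)
  have h2 : HasDerivAt Real.exp (Real.exp t) t := Real.hasDerivAt_exp t
  have h3 : HasDerivAt (fun t : ℝ => t^2) (2*t) t := by
    simpa using hasDerivAt_pow 2 t
  have := (((h1.sub h2).add_const 1).const_mul (2*(ρ+1))).sub (h2.mul h3)
  refine this.congr_deriv ?_
  ring

private lemma Fρ_zero (ρ : ℝ) : Fρ ρ 0 = 0 := by
  simp [Fρ]

private lemma key (ρ t : ℝ) (hρ : 0 < ρ) (ht : t ≤ ρ) :
    Real.exp t * t^2 ≤ 2*(ρ+1)*(t * Real.exp t - Real.exp t + 1) := by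
  have hdiff : Differentiable ℝ (Fρ ρ) := fun x => (hasDerivFρ ρ x).differentiableAt
  have hF : 0 ≤ Fρ ρ t := by
    rcases le_or_gt t 0 with h | h
    · have hanti : AntitoneOn (Fρ ρ) (Set.Iic 0) := by
        apply antitoneOn_of_deriv_nonpos (convex_Iic 0) hdiff.continuous.continuousOn
          hdiff.differentiableOn
        intro x hx
        rw [interior_Iic] at hx
        rw [(hasDerivFρ ρ x).deriv]
        have hx0 : x < 0 := hx
        have : 0 < 2*ρ - x := by linarith
        nlinarith [Real.exp_pos x, mul_pos (Real.exp_pos x) this]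
      have := hanti (Set.mem_Iic.2 h) (Set.mem_Iic.2 le_rfl) h
      simpa [Fρ_zero ρ] using this
    · have hmono : MonotoneOn (Fρ ρ) (Set.Icc 0 ρ) := by
        apply monotoneOn_of_deriv_nonneg (convex_Icc 0 ρ) hdiff.continuous.continuousOn
          hdiff.differentiableOn
        intro x hx
        rw [interior_Icc] at hx
        rw [(hasDerivFρ ρ x).deriv]
        have hx0 : 0 < x := hx.1
        have : 0 < 2*ρ - x := by linarith [hx.2]
        positivity
      have := hmono (Set.mem_Icc.2 ⟨le_rfl, hρ.le⟩) (Set.mem_Icc.2 ⟨h.le, ht⟩) h.le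
      simpa [Fρ_zero ρ] using this
  unfold Fρ at hF
  linarith

theorem stmt_0 {Z : Type*} [MeasurableSpace Z] (μ : Measure Z)
    (p q : Z → ℝ) (ρ : ℝ) (hρ : 0 < ρ)
    (hp_pos : ∀ z, 0 < p z) (hq_pos : ∀ z, 0 < q z)
    (hp_meas : Measurable p) (hq_meas : Measurable q)
    (hp1 : ∫ z, p z ∂μ = 1) (hq1 : ∫ z, q z ∂μ = 1)
    (hbound : ∀ z, Real.log (p z / q z) ≤ ρ)
    (hint1 : Integrable (fun z => p z * (Real.log (p z / q z))^2) μ)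
    (hint2 : Integrable (fun z => p z * Real.log (p z / q z)) μ) :
    ∫ z, p z * (Real.log (p z / q z))^2 ∂μ
      ≤ 2 * (ρ + 1) * ∫ z, p z * Real.log (p z / q z) ∂μ := by
  -- integrability of p and q
  have hpint : Integrable p μ := by
    by_contra h
    rw [integral_undef h] at hp1; norm_num at hp1
  have hqint : Integrable q μ := by
    by_contra h
    rw [integral_undef h] at hq1; norm_num at hq1
  -- pointwise inequality
  have hpt : ∀ z, p z * (Real.log (p z / q z))^2
      ≤ 2*(ρ+1) * (p z * Real.log (p z / q z) - p z + q z) := by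
    intro z
    set t := Real.log (p z / q z) with ht
    have hu : 0 < p z / q z := div_pos (hp_pos z) (hq_pos z)
    have hexp : Real.exp t = p z / q z := Real.exp_log hu
    have hk := key ρ t hρ (hbound z)
    have hq0 := (hq_pos z)
    have h1 : q z * (Real.exp t * t^2) ≤ q z * (2*(ρ+1)*(t * Real.exp t - Real.exp t + 1)) :=
      mul_le_mul_of_nonneg_left hk hq0.le
    have hpq : q z * Real.exp t = p z := by
      rw [hexp]; field_simp
    calc p z * t^2 = q z * (Real.exp t * t^2) := by rw [← hpq]; ring
      _ ≤ q z * (2*(ρ+1)*(t * Real.exp t - Real.exp t + 1)) := h1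
      _ = 2*(ρ+1) * (q z * Real.exp t * t - q z * Real.exp t + q z) := by ring
      _ = 2*(ρ+1) * (p z * t - p z + q z) := by rw [hpq]
  have hintR : Integrable (fun z => 2*(ρ+1) * (p z * Real.log (p z / q z) - p z + q z)) μ :=
    (((hint2.sub hpint).add hqint).const_mul _)
  have hle := integral_mono hint1 hintR hpt
  rw [integral_const_mul] at hle
  have : ∫ z, (p z * Real.log (p z / q z) - p z + q z) ∂μ
      = ∫ z, p z * Real.log (p z / q z) ∂μ := by
    have hA : Integrable (fun z => p z * Real.log (p z / q z) - p z) μ := hint2.sub hpint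
    rw [integral_add hA hqint, integral_sub hint2 hpint, hp1, hq1]
    ring
  rw [this] at hle
  exact hle
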